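/- Let k be a field, A an affine integral domain over k with ML(A) = A (i.e., A is rigid: every exponential map on A is trivial), and suppose B is a k-algebra with A^{[1]} ≅_k B^{[1]} and trdeg_k(B) = trdeg_k(A). If A is algebraically closed in B^{[1]} under the identification, then A = B. -/

import Mathlib

/-- An exponential map (equivalently, a `𝔾ₐ`-action) on a `k`-algebra `A`:
a `k`-algebra homomorphism `φ : A → A[U]` such that evaluation at `U = 0`
is the identity and the coaction axiom `φ_V ∘ φ_U = φ_{U+V}` holds. -/
structure ExpMap (k A : Type*) [Field k] [CommRing A] [Algebra k A] where
  toFun : A →ₐ[k] Polynomial A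
  eval_zero : ∀ a : A, (toFun a).eval 0 = a
  coaction : ∀ a : A,
    (toFun a).map (toFun.toRingHom) =
      (toFun a).eval₂ (Polynomial.C.comp Polynomial.C)
        (Polynomial.X + Polynomial.C Polynomial.X)

variable {k A : Type*} [Field k] [CommRing A] [Algebra k A]

/-- The ring of invariants `A^φ = {a ∈ A : φ(a) = a}` of an exponential map. -/
def ExpMap.invariants (φ : ExpMap k A) : Subalgebra k A where
  carrier := {a : A | φ.toFun a = Polynomial.C a}
  mul_mem' := by
    intro a b ha hb
    simp only [Set.mem_setOf_eq, map_mul] at *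
    rw [ha, hb]
  add_mem' := by
    intro a b ha hb
    simp only [Set.mem_setOf_eq, map_add] at *
    rw [ha, hb]
  algebraMap_mem' := by
    intro r
    simp only [Set.mem_setOf_eq, AlgHom.commutes, Polynomial.algebraMap_apply]

/-- An exponential map is nontrivial if its ring of invariants is a proper subring. -/
def ExpMap.Nontrivial (φ : ExpMap k A) : Prop := ∃ a : A, φ.toFun a ≠ Polynomial.C a


set_option linter.unusedSectionVars false
set_option linter.unusedVariables false
set_option maxHeartbeats 1600000

namespace RigidCancelAux
open Polynomial

section

variable {k : Type*} {A : Type*} {B : Type*} [Field k] [CommRing A] [Algebra k A]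
  [IsDomain A] [CommRing B] [IsDomain B] [Algebra k B]
variable (e : Polynomial A ≃ₐ[k] Polynomial B)


lemma hasseDeriv_map' {R S : Type*} [CommRing R] [CommRing S] (f : R →+* S)
    (i : ℕ) (p : Polynomial R) :
    hasseDeriv i (p.map f) = (hasseDeriv i p).map f := by
  ext n
  simp [hasseDeriv_coeff, coeff_map, map_mul]

/-- the τ-expansion coefficient identity -/
lemma tau_coeff {R : Type*} [CommRing R] (q : Polynomial R) (i : ℕ) :
    (q.eval₂ (C.comp C) (X + C X)).coeff i = hasseDeriv i q := by
  have h1 : q.eval₂ (C.comp C) (X + C X) = taylor (X : Polynomial R) (q.map C) := by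
    rw [taylor_apply, comp, eval₂_map]
  rw [h1, taylor_coeff, hasseDeriv_map', eval_map, eval₂_C_X]


/-- transported Hasse derivative -/
noncomputable def Dm (j : ℕ) (p : Polynomial A) : Polynomial A :=
  e.symm (hasseDeriv j (e p))

lemma Dm_zero (p : Polynomial A) : Dm e 0 p = p := by
  simp [Dm, hasseDeriv_zero']

lemma Dm_add (j : ℕ) (p q : Polynomial A) : Dm e j (p + q) = Dm e j p + Dm e j q := by
  simp [Dm, map_add]

lemma Dm_sub (j : ℕ) (p q : Polynomial A) : Dm e j (p - q) = Dm e j p - Dm e j q := by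
  simp [Dm, map_sub]

lemma Dm_zero_poly (j : ℕ) : Dm e j (0 : Polynomial A) = 0 := by
  simp [Dm]

lemma Dm_sum {ι : Type*} (t : Finset ι) (f : ι → Polynomial A) (j : ℕ) :
    Dm e j (∑ i ∈ t, f i) = ∑ i ∈ t, Dm e j (f i) := by
  simp [Dm, map_sum]

lemma Dm_mul (j : ℕ) (p q : Polynomial A) :
    Dm e j (p * q) = ∑ ij ∈ Finset.HasAntidiagonal.antidiagonal j, Dm e ij.1 p * Dm e ij.2 q := by
  simp only [Dm, map_mul e, hasseDeriv_mul, map_sum, map_mul]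

lemma Dm_comp (i l : ℕ) (p : Polynomial A) :
    Dm e i (Dm e l p) = (i + l).choose i • Dm e (i + l) p := by
  simp only [Dm, AlgEquiv.apply_symm_apply]
  have := congrFun (congrArg (fun f => f.toFun) (hasseDeriv_comp (R := B) i l)) (e p)
  simpa using congrArg e.symm this

lemma Dm_eq_zero (j : ℕ) (p : Polynomial A) (h : (e p).natDegree < j) : Dm e j p = 0 := by
  simp [Dm, hasseDeriv_eq_zero_of_lt_natDegree _ _ h]

lemma Dm_one (j : ℕ) (hj : 0 < j) : Dm e j (1 : Polynomial A) = 0 := by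
  have : hasseDeriv j (1 : Polynomial B) = 0 := hasseDeriv_apply_one j hj
  simp [Dm, map_one, this]

lemma Dm_algebraMap (j : ℕ) (hj : 0 < j) (κ : k) :
    Dm e j (C (algebraMap k A κ)) = 0 := by
  have h1 : (C (algebraMap k A κ) : Polynomial A) = algebraMap k (Polynomial A) κ := by
    simp [Polynomial.algebraMap_apply]
  have h2 : e (algebraMap k (Polynomial A) κ) = algebraMap k (Polynomial B) κ :=
    e.commutes κ
  have h3 : (algebraMap k (Polynomial B) κ) = C (algebraMap k B κ) := by
    simp [Polynomial.algebraMap_apply]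
  have h4 : hasseDeriv j (C (algebraMap k B κ)) = 0 := hasseDeriv_C j _ hj
  rw [Dm, h1, h2, h3, h4]
  simp


variable (e : Polynomial A ≃ₐ[k] Polynomial B)

lemma sum_deg_bound {ι : Type*} (s : ℕ) (hs : 0 < s) (t : Finset ι) (f : ι → Polynomial A)
    (M : ℕ) (h : ∀ i ∈ t, s * (f i).natDegree ≤ M) : s * (∑ i ∈ t, f i).natDegree ≤ M := by
  have h1 : (∑ i ∈ t, f i).natDegree ≤ M / s := by
    apply natDegree_sum_le_of_forall_le
    intro i hi
    exact (Nat.le_div_iff_mul_le hs).2 (by rw [mul_comm]; exact h i hi)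
  calc s * (∑ i ∈ t, f i).natDegree ≤ s * (M / s) := Nat.mul_le_mul_left _ h1
    _ ≤ M := by rw [mul_comm]; exact Nat.div_mul_le_self _ _

lemma mul_deg_bound (s : ℕ) (p q : Polynomial A) (Mp Mq : ℕ)
    (hp : s * p.natDegree ≤ Mp) (hq : s * q.natDegree ≤ Mq) :
    s * (p * q).natDegree ≤ Mp + Mq := by
  by_cases h0 : p = 0
  · simp [h0]
  by_cases h1 : q = 0
  · simp [h1]
  rw [natDegree_mul h0 h1, mul_add]
  exact add_le_add hp hq

lemma coeff_eq_zero_of_mul_bound (s : ℕ) (p : Polynomial A) (M m : ℕ)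
    (hb : s * p.natDegree ≤ M) (hm : M < s * m) : p.coeff m = 0 := by
  apply coeff_eq_zero_of_natDegree_lt
  by_contra h
  push_neg at h
  exact absurd (le_trans (Nat.mul_le_mul_left s h) hb) (not_le.2 hm)

/-- critical weight data -/
structure CritData : Type _ where
  r : ℕ
  s : ℕ
  hs : 0 < s
  boundA : ∀ (a : A) (j : ℕ), s * (Dm e j (C a)).natDegree ≤ r * j
  boundX : ∀ j : ℕ, s * (Dm e j X).natDegree ≤ s + r * j

variable (cd : CritData e)

lemma boundMono : ∀ (n : ℕ) (u : A) (j : ℕ),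
    cd.s * (Dm e j (C u * X ^ n)).natDegree ≤ cd.s * n + cd.r * j := by
  intro n
  induction n with
  | zero =>
    intro u j
    simpa using cd.boundA u j
  | succ n ih =>
    intro u j
    have hx : (C u * X ^ (n + 1) : Polynomial A) = C u * X ^ n * X := by ring
    rw [hx, Dm_mul]
    refine sum_deg_bound _ cd.hs _ _ _ ?_
    intro ij hij
    have hij' : ij.1 + ij.2 = j := Finset.HasAntidiagonal.mem_antidiagonal.1 hij
    have h2 := cd.boundX ij.2
    calc cd.s * (Dm e ij.1 (C u * X ^ n) * Dm e ij.2 X).natDegree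
        ≤ (cd.s * n + cd.r * ij.1) + (cd.s + cd.r * ij.2) :=
          mul_deg_bound _ _ _ _ _ (ih u ij.1) h2
      _ = cd.s * (n + 1) + cd.r * (ij.1 + ij.2) := by ring
      _ = cd.s * (n + 1) + cd.r * j := by rw [hij']

open Classical in
/-- top-component extraction -/
noncomputable def tc (n j : ℕ) (p : Polynomial A) : A :=
  if cd.s ∣ cd.r * j then p.coeff (n + cd.r * j / cd.s) else 0

/-- graded top coefficient sequence -/
noncomputable def th (u : A) (n j : ℕ) : A := tc e cd n j (Dm e j (C u * X ^ n))

lemma th_zero (u : A) (n : ℕ) : th e cd u n 0 = u := by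
  rw [th, tc, if_pos (by simp)]
  simp [Dm_zero, coeff_C_mul, coeff_X_pow]

lemma th_high (u : A) (n j : ℕ) (h : (e (C u * X ^ n)).natDegree < j) : th e cd u n j = 0 := by
  rw [th, Dm_eq_zero _ _ _ h, tc]
  split <;> simp

lemma th_mul (u v : A) (n₁ n₂ j : ℕ) :
    th e cd (u * v) (n₁ + n₂) j
      = ∑ ij ∈ Finset.HasAntidiagonal.antidiagonal j, th e cd u n₁ ij.1 * th e cd v n₂ ij.2 := by
  classical
  have hCmul : (C (u * v) * X ^ (n₁ + n₂) : Polynomial A) = (C u * X ^ n₁) * (C v * X ^ n₂) := by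
    rw [C_mul]; ring
  -- coefficient of each product term
  have key : ∀ ij ∈ Finset.HasAntidiagonal.antidiagonal j, cd.s ∣ cd.r * j →
      (Dm e ij.1 (C u * X ^ n₁) * Dm e ij.2 (C v * X ^ n₂)).coeff (n₁ + n₂ + cd.r * j / cd.s)
        = th e cd u n₁ ij.1 * th e cd v n₂ ij.2 := by
    intro ij hij hdvd
    have hij' : ij.1 + ij.2 = j := Finset.HasAntidiagonal.mem_antidiagonal.1 hij
    by_cases hd1 : cd.s ∣ cd.r * ij.1
    · have hd2 : cd.s ∣ cd.r * ij.2 := by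
        have : cd.r * ij.2 = cd.r * j - cd.r * ij.1 := by
          rw [← hij']; ring_nf; omega
        rw [this]
        exact Nat.dvd_sub hdvd hd1
      set m₁ := n₁ + cd.r * ij.1 / cd.s with hm₁
      set m₂ := n₂ + cd.r * ij.2 / cd.s with hm₂
      have hsum : m₁ + m₂ = n₁ + n₂ + cd.r * j / cd.s := by
        have : cd.r * j / cd.s = cd.r * ij.1 / cd.s + cd.r * ij.2 / cd.s := by
          rw [← hij', Nat.mul_add, Nat.add_div_of_dvd_right hd1]
        omega
      rw [coeff_mul]
      rw [Finset.sum_eq_single (m₁, m₂)]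
      · rw [th, th, tc, tc, if_pos hd1, if_pos hd2]
      · intro mn hmn hne
        have hmn' : mn.1 + mn.2 = n₁ + n₂ + cd.r * j / cd.s := Finset.HasAntidiagonal.mem_antidiagonal.1 hmn
        by_contra hc
        have hc1 : (Dm e ij.1 (C u * X ^ n₁)).coeff mn.1 ≠ 0 := fun h => hc (by rw [h, zero_mul])
        have hc2 : (Dm e ij.2 (C v * X ^ n₂)).coeff mn.2 ≠ 0 := fun h => hc (by rw [h, mul_zero])
        have hb1 : mn.1 ≤ (Dm e ij.1 (C u * X ^ n₁)).natDegree := le_natDegree_of_ne_zero hc1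
        have hb2 : mn.2 ≤ (Dm e ij.2 (C v * X ^ n₂)).natDegree := le_natDegree_of_ne_zero hc2
        have hbb1 : cd.s * mn.1 ≤ cd.s * n₁ + cd.r * ij.1 :=
          le_trans (Nat.mul_le_mul_left _ hb1) (boundMono e cd n₁ u ij.1)
        have hbb2 : cd.s * mn.2 ≤ cd.s * n₂ + cd.r * ij.2 :=
          le_trans (Nat.mul_le_mul_left _ hb2) (boundMono e cd n₂ v ij.2)
        -- total degree is exactly the sum of the bounds
        have htot : cd.s * mn.1 + cd.s * mn.2 = (cd.s * n₁ + cd.r * ij.1) + (cd.s * n₂ + cd.r * ij.2) := by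
          have e1 : cd.s * (cd.r * j / cd.s) = cd.r * j := Nat.mul_div_cancel' hdvd
          have e2 : cd.r * j = cd.r * ij.1 + cd.r * ij.2 := by rw [← hij']; ring
          calc cd.s * mn.1 + cd.s * mn.2 = cd.s * (mn.1 + mn.2) := by ring
            _ = cd.s * (n₁ + n₂) + cd.s * (cd.r * j / cd.s) := by rw [hmn']; ring
            _ = _ := by rw [e1, e2]; ring
        have hq1 : cd.s * mn.1 = cd.s * n₁ + cd.r * ij.1 := by omega
        have hq2 : cd.s * mn.2 = cd.s * n₂ + cd.r * ij.2 := by omega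
        apply hne
        have : mn.1 = m₁ := by
          have e1 : cd.s * (cd.r * ij.1 / cd.s) = cd.r * ij.1 := Nat.mul_div_cancel' hd1
          have := cd.hs
          rw [hm₁]; nlinarith [hq1]
        have h2' : mn.2 = m₂ := by
          have e1 : cd.s * (cd.r * ij.2 / cd.s) = cd.r * ij.2 := Nat.mul_div_cancel' hd2
          have := cd.hs
          rw [hm₂]; nlinarith [hq2]
        exact Prod.ext this h2'
      · intro hnotmem
        exact absurd (Finset.HasAntidiagonal.mem_antidiagonal.2 hsum) hnotmem
    · -- ¬ s ∣ r * ij.1 : both sides vanish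
      have hrhs : th e cd u n₁ ij.1 = 0 := by rw [th, tc, if_neg hd1]
      rw [hrhs, zero_mul, coeff_mul]
      apply Finset.sum_eq_zero
      intro mn hmn
      have hmn' : mn.1 + mn.2 = n₁ + n₂ + cd.r * j / cd.s := Finset.HasAntidiagonal.mem_antidiagonal.1 hmn
      by_contra hc
      have hc1 : (Dm e ij.1 (C u * X ^ n₁)).coeff mn.1 ≠ 0 := fun h => hc (by rw [h, zero_mul])
      have hc2 : (Dm e ij.2 (C v * X ^ n₂)).coeff mn.2 ≠ 0 := fun h => hc (by rw [h, mul_zero])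
      have hb1 : mn.1 ≤ (Dm e ij.1 (C u * X ^ n₁)).natDegree := le_natDegree_of_ne_zero hc1
      have hb2 : mn.2 ≤ (Dm e ij.2 (C v * X ^ n₂)).natDegree := le_natDegree_of_ne_zero hc2
      have hbb1 : cd.s * mn.1 ≤ cd.s * n₁ + cd.r * ij.1 :=
        le_trans (Nat.mul_le_mul_left _ hb1) (boundMono e cd n₁ u ij.1)
      have hbb2 : cd.s * mn.2 ≤ cd.s * n₂ + cd.r * ij.2 :=
        le_trans (Nat.mul_le_mul_left _ hb2) (boundMono e cd n₂ v ij.2)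
      -- strictness from non-divisibility
      have hne1 : cd.s * mn.1 ≠ cd.s * n₁ + cd.r * ij.1 := by
        intro h
        apply hd1
        have : cd.r * ij.1 = cd.s * mn.1 - cd.s * n₁ := by omega
        rw [this]
        exact Nat.dvd_sub (Dvd.intro _ rfl) (Dvd.intro _ rfl)
      have e1 : cd.s * (cd.r * j / cd.s) = cd.r * j := Nat.mul_div_cancel' hdvd
      have e2 : cd.r * j = cd.r * ij.1 + cd.r * ij.2 := by rw [← hij']; ring
      have htot : cd.s * mn.1 + cd.s * mn.2 = (cd.s * n₁ + cd.r * ij.1) + (cd.s * n₂ + cd.r * ij.2) := by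
        calc cd.s * mn.1 + cd.s * mn.2 = cd.s * (mn.1 + mn.2) := by ring
          _ = cd.s * (n₁ + n₂) + cd.s * (cd.r * j / cd.s) := by rw [hmn']; ring
          _ = _ := by rw [e1, e2]; ring
      omega
  by_cases hdvd : cd.s ∣ cd.r * j
  · rw [th, tc, if_pos hdvd, hCmul, Dm_mul, finset_sum_coeff]
    exact Finset.sum_congr rfl (fun ij hij => key ij hij hdvd)
  · rw [th, tc, if_neg hdvd]
    symm
    apply Finset.sum_eq_zero
    intro ij hij
    have hij' : ij.1 + ij.2 = j := Finset.HasAntidiagonal.mem_antidiagonal.1 hij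
    by_cases hd1 : cd.s ∣ cd.r * ij.1
    · have hd2 : ¬ cd.s ∣ cd.r * ij.2 := by
        intro hd2
        apply hdvd
        have : cd.r * j = cd.r * ij.1 + cd.r * ij.2 := by rw [← hij']; ring
        rw [this]; exact Nat.dvd_add hd1 hd2
      have hz : th e cd v n₂ ij.2 = 0 := by rw [th, tc, if_neg hd2]
      rw [hz, mul_zero]
    · have hz : th e cd u n₁ ij.1 = 0 := by rw [th, tc, if_neg hd1]
      rw [hz, zero_mul]


lemma th_top_mul (u v : A) (n₁ n₂ J1 J2 : ℕ)
    (hu' : ∀ j, J1 < j → th e cd u n₁ j = 0) (hv' : ∀ j, J2 < j → th e cd v n₂ j = 0) :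
    th e cd (u * v) (n₁ + n₂) (J1 + J2) = th e cd u n₁ J1 * th e cd v n₂ J2
    ∧ ∀ j, J1 + J2 < j → th e cd (u * v) (n₁ + n₂) j = 0 := by
  constructor
  · rw [th_mul]
    apply Finset.sum_eq_single (J1, J2)
    · intro ij hij hne
      have hij' : ij.1 + ij.2 = J1 + J2 := Finset.HasAntidiagonal.mem_antidiagonal.1 hij
      rcases lt_or_ge J1 ij.1 with h | h
      · rw [hu' _ h, zero_mul]
      · rcases lt_or_ge J2 ij.2 with h2 | h2
        · rw [hv' _ h2, mul_zero]
        · exact absurd (Prod.ext (by omega) (by omega)) hne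
    · intro hmem
      simp [Finset.HasAntidiagonal.mem_antidiagonal] at hmem
  · intro j hj
    rw [th_mul]
    apply Finset.sum_eq_zero
    intro ij hij
    have hij' : ij.1 + ij.2 = j := Finset.HasAntidiagonal.mem_antidiagonal.1 hij
    rcases lt_or_ge J1 ij.1 with h | h
    · rw [hu' _ h, zero_mul]
    · have : J2 < ij.2 := by omega
      rw [hv' _ this, mul_zero]

lemma exists_top (u : A) (hu : u ≠ 0) (n : ℕ) :
    ∃ J, th e cd u n J ≠ 0 ∧ ∀ j, J < j → th e cd u n j = 0 := by
  classical
  set Nb := (e (C u * X ^ n)).natDegree with hNb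
  set P : ℕ → Prop := fun j => th e cd u n j ≠ 0 with hP
  refine ⟨Nat.findGreatest P Nb, ?_, ?_⟩
  · have h0 : P 0 := by rw [hP]; simpa [th_zero] using hu
    exact Nat.findGreatest_spec (Nat.zero_le _) h0
  · intro j hj
    rcases le_or_gt j Nb with h | h
    · by_contra hc
      exact Nat.findGreatest_is_greatest hj h hc
    · exact th_high e cd u n j h

lemma th_top_pow (u : A) (J0 J : ℕ)
    (hu0 : th e cd u 0 J0 ≠ 0) (hu0' : ∀ j, J0 < j → th e cd u 0 j = 0)
    (hX : th e cd 1 1 J ≠ 0) (hX' : ∀ j, J < j → th e cd 1 1 j = 0) :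
    ∀ m : ℕ, th e cd u m (J0 + m * J) ≠ 0 ∧ ∀ j, J0 + m * J < j → th e cd u m j = 0 := by
  intro m
  induction m with
  | zero => simpa using ⟨hu0, hu0'⟩
  | succ m ih =>
    have key := th_top_mul e cd u 1 m 1 (J0 + m * J) J ih.2 hX'
    have hmul : u * 1 = u := mul_one u
    have hadd : m + 1 = m + 1 := rfl
    constructor
    · have := key.1
      rw [hmul] at this
      rw [show J0 + (m + 1) * J = (J0 + m * J) + J by ring, this]
      exact mul_ne_zero ih.1 hX
    · intro j hj
      have hexp : (m + 1) * J = m * J + J := by ring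
      have := key.2 j (by omega)
      rwa [hmul] at this

lemma X_top_vanish : ∀ j, 0 < j → th e cd 1 1 j = 0 := by
  classical
  by_contra hc
  push_neg at hc
  obtain ⟨j0, hj0pos, hj0⟩ := hc
  set NX := (e (C 1 * X ^ 1)).natDegree with hNX
  have hj0le : j0 ≤ NX := by
    by_contra h
    exact hj0 (th_high e cd 1 1 j0 (by omega))
  set P : ℕ → Prop := fun j => 0 < j ∧ th e cd 1 1 j ≠ 0 with hP
  set J := Nat.findGreatest P NX with hJ
  have hPJ : P J := Nat.findGreatest_spec hj0le ⟨hj0pos, hj0⟩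
  have hJpos : 0 < J := hPJ.1
  have hJne : th e cd 1 1 J ≠ 0 := hPJ.2
  have hJmax : ∀ j, J < j → th e cd 1 1 j = 0 := by
    intro j hj
    rcases le_or_gt j NX with h | h
    · by_contra hcc
      exact Nat.findGreatest_is_greatest hj h ⟨by omega, hcc⟩
    · exact th_high e cd 1 1 j h
  -- divisibility at J
  have hdvdJ : cd.s ∣ cd.r * J := by
    by_contra hd
    apply hJne
    rw [th, tc, if_neg hd]
  set m := 1 + cd.r * J / cd.s with hm
  have hsm : cd.s * m = cd.s + cd.r * J := by
    rw [hm, Nat.mul_add, mul_one, Nat.mul_div_cancel' hdvdJ]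
  set b := th e cd 1 1 J with hb
  have hbne : b ≠ 0 := hJne
  have hbcoeff : (Dm e J X).coeff m = b := by
    rw [hb, th, tc, if_pos hdvdJ]
    norm_num
    rfl
  -- Claim C1 : the top part of Dm J X is "invariant"
  have C1 : ∀ i, 0 < i → th e cd b m i = 0 := by
    intro i hi
    by_cases hdi : cd.s ∣ cd.r * i
    swap
    · rw [th, tc, if_neg hdi]
    rw [th, tc, if_pos hdi]
    set N := m + cd.r * i / cd.s with hN
    have hsN : cd.s * N = cd.s * m + cd.r * i := by
      rw [hN, Nat.mul_add, Nat.mul_div_cancel' hdi]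
    set low := Dm e J X - C b * X ^ m with hlow
    have hlowc : ∀ m', m ≤ m' → low.coeff m' = 0 := by
      intro m' hm'
      rw [hlow, coeff_sub, coeff_C_mul, coeff_X_pow]
      rcases eq_or_lt_of_le hm' with h | h
      · rw [← h, hbcoeff]; simp
      · have h1 : (Dm e J X).coeff m' = 0 := by
          apply coeff_eq_zero_of_mul_bound cd.s _ (cd.s + cd.r * J)
          · exact cd.boundX J
          · rw [← hsm]; exact (Nat.mul_lt_mul_left cd.hs).2 h
        rw [h1]
        simp [Nat.ne_of_gt h]
    -- rewrite C b * X ^ m = Dm J X - low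
    have hsplit : (C b * X ^ m : Polynomial A) = Dm e J X - low := by rw [hlow]; ring
    rw [hsplit, Dm_sub]
    rw [coeff_sub]
    have hz1 : (Dm e i (Dm e J X)).coeff N = 0 := by
      rw [Dm_comp]
      have hdvdiJ : cd.s ∣ cd.r * (i + J) := by
        rw [Nat.mul_add]; exact Nat.dvd_add hdi hdvdJ
      have hidx : N = 1 + cd.r * (i + J) / cd.s := by
        have h1 : cd.r * (i + J) = cd.r * i + cd.r * J := by ring
        rw [hN, hm, h1, Nat.add_div_of_dvd_right hdi]
        omega
      have hth : th e cd 1 1 (i + J) = 0 := hJmax _ (by omega)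
      rw [th, tc, if_pos hdvdiJ] at hth
      rw [coeff_smul, hidx]
      have : (Dm e (i + J) X).coeff (1 + cd.r * (i + J) / cd.s) = 0 := by
        simpa using hth
      rw [this, smul_zero]
    have hz2 : (Dm e i low).coeff N = 0 := by
      have hlowsum : low = ∑ m' ∈ Finset.range m, C (low.coeff m') * X ^ m' := by
        ext t
        rw [finset_sum_coeff]
        rcases lt_or_ge t m with h | h
        · rw [Finset.sum_eq_single t]
          · simp [coeff_C_mul, coeff_X_pow]
          · intro b' _ hbne'
            simp [coeff_C_mul, coeff_X_pow, Ne.symm hbne']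
          · intro hmem
            exact absurd (Finset.mem_range.2 h) hmem
        · rw [hlowc t h]
          apply (Finset.sum_eq_zero _).symm
          intro m' hm'
          have : m' < m := Finset.mem_range.1 hm'
          simp [coeff_C_mul, coeff_X_pow]
          intro h'
          omega
      rw [hlowsum, Dm_sum, finset_sum_coeff]
      apply Finset.sum_eq_zero
      intro m' hm'
      have hm'lt : m' < m := Finset.mem_range.1 hm'
      apply coeff_eq_zero_of_mul_bound cd.s _ (cd.s * m' + cd.r * i)
      · exact boundMono e cd m' _ i
      · rw [hsN]
        have := cd.hs
        nlinarith
    rw [hz1, hz2]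
    ring
  -- Claim C2 : contradiction via multiplicativity of top indices
  obtain ⟨J0, hJ0, hJ0'⟩ := exists_top e cd b hbne 0
  have htp := th_top_pow e cd b J0 J hJ0 hJ0' hJne hJmax m
  have hmpos : 0 < m := by rw [hm]; exact Nat.le_add_right 1 _
  have hmJ : 0 < m * J := Nat.mul_pos hmpos hJpos
  exact htp.1 (C1 _ (by omega))

lemma X_pow_top_vanish : ∀ n j, 0 < j → th e cd 1 n j = 0 := by
  intro n
  induction n with
  | zero =>
    intro j hj
    have h1 : (C 1 * X ^ 0 : Polynomial A) = 1 := by simp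
    rw [th, h1, Dm_one e j hj, tc]
    split <;> simp
  | succ n ih =>
    intro j hj
    have h1 : (1 : A) * 1 = 1 := one_mul 1
    have := th_mul e cd 1 1 n 1 j
    rw [h1] at this
    rw [this]
    apply Finset.sum_eq_zero
    intro ij hij
    have hij' : ij.1 + ij.2 = j := Finset.HasAntidiagonal.mem_antidiagonal.1 hij
    rcases Nat.eq_zero_or_pos ij.2 with h2 | h2
    · have : 0 < ij.1 := by omega
      rw [ih ij.1 this, zero_mul]
    · rw [X_top_vanish e cd ij.2 h2, mul_zero]


noncomputable def bet (j : ℕ) (a : A) : A := th e cd a 0 j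

lemma CX0 (a : A) : (C a * X ^ 0 : Polynomial A) = C a := by simp

lemma bet_def (j : ℕ) (a : A) :
    bet e cd j a = tc e cd 0 j (Dm e j (C a)) := by
  rw [bet, th, CX0]

lemma bet_zero_idx (a : A) : bet e cd 0 a = a := th_zero e cd a 0

lemma bet_zero (j : ℕ) : bet e cd j (0 : A) = 0 := by
  rw [bet_def]
  have h : (C (0 : A) : Polynomial A) = 0 := by simp
  rw [h, Dm_zero_poly, tc]
  split <;> simp

lemma bet_add (j : ℕ) (a b : A) : bet e cd j (a + b) = bet e cd j a + bet e cd j b := by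
  rw [bet_def, bet_def, bet_def]
  have h : (C (a + b) : Polynomial A) = C a + C b := by rw [C_add]
  rw [h, Dm_add, tc, tc, tc]
  split <;> simp

lemma bet_mul (j : ℕ) (a b : A) :
    bet e cd j (a * b) = ∑ ij ∈ Finset.HasAntidiagonal.antidiagonal j, bet e cd ij.1 a * bet e cd ij.2 b := by
  have := th_mul e cd a b 0 0 j
  simpa [bet] using this

lemma bet_algebraMap (j : ℕ) (κ : k) :
    bet e cd j (algebraMap k A κ) = if j = 0 then algebraMap k A κ else 0 := by
  rcases Nat.eq_zero_or_pos j with h | h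
  · subst h; simp [bet_zero_idx]
  · rw [if_neg (by omega), bet_def, Dm_algebraMap e j h, tc]
    split <;> simp

lemma bet_one (j : ℕ) : bet e cd j (1 : A) = if j = 0 then 1 else 0 := by
  have := bet_algebraMap e cd j (1 : k)
  simpa using this

/-- The key composition identity (descended coaction). -/
lemma bet_comp (a : A) (i l : ℕ) :
    bet e cd l (bet e cd i a) = (l + i).choose l • bet e cd (l + i) a := by
  classical
  by_cases hdi : cd.s ∣ cd.r * i
  · by_cases hdl : cd.s ∣ cd.r * l
    · -- main case
      have hdil : cd.s ∣ cd.r * (l + i) := by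
        rw [Nat.mul_add]; exact Nat.dvd_add hdl hdi
      set ι := cd.r * i / cd.s with hι
      set N := ι + cd.r * l / cd.s with hN
      have hNidx : N = cd.r * (l + i) / cd.s := by
        rw [hN, hι]
        rw [show cd.r * (l + i) = cd.r * i + cd.r * l by ring, Nat.add_div_of_dvd_right hdi]
      have hsN : cd.s * N = cd.s * ι + cd.r * l := by
        rw [hN, Nat.mul_add, Nat.mul_div_cancel' hdl]
      have hsι : cd.s * ι = cd.r * i := Nat.mul_div_cancel' hdi
      -- step 1
      have step1 : (Dm e l (Dm e i (C a))).coeff N = (l + i).choose l • bet e cd (l + i) a := by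
        rw [Dm_comp, coeff_smul, bet_def, tc, if_pos hdil, hNidx]
        norm_num
      -- step 2 : decomposition
      set low := Dm e i (C a) - C (bet e cd i a) * X ^ ι with hlow
      have hbcoeff : (Dm e i (C a)).coeff ι = bet e cd i a := by
        rw [bet_def, tc, if_pos hdi]
        norm_num
        rfl
      have hlowc : ∀ m', ι ≤ m' → low.coeff m' = 0 := by
        intro m' hm'
        rw [hlow, coeff_sub, coeff_C_mul, coeff_X_pow]
        rcases eq_or_lt_of_le hm' with h | h
        · rw [← h, hbcoeff]; simp
        · have h1 : (Dm e i (C a)).coeff m' = 0 := by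
            apply coeff_eq_zero_of_mul_bound cd.s _ (cd.r * i)
            · exact cd.boundA a i
            · rw [← hsι]; exact (Nat.mul_lt_mul_left cd.hs).2 h
          rw [h1]
          simp [Nat.ne_of_gt h]
      -- step 3
      have step3 : (Dm e l low).coeff N = 0 := by
        have hlowsum : low = ∑ m' ∈ Finset.range ι, C (low.coeff m') * X ^ m' := by
          ext t
          rw [finset_sum_coeff]
          rcases lt_or_ge t ι with h | h
          · rw [Finset.sum_eq_single t]
            · simp [coeff_C_mul, coeff_X_pow]
            · intro b' _ hbne'
              simp [coeff_C_mul, coeff_X_pow, Ne.symm hbne']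
            · intro hmem
              exact absurd (Finset.mem_range.2 h) hmem
          · rw [hlowc t h]
            apply (Finset.sum_eq_zero _).symm
            intro m' hm'
            have : m' < ι := Finset.mem_range.1 hm'
            simp [coeff_C_mul, coeff_X_pow]
            intro h'
            omega
        rw [hlowsum, Dm_sum, finset_sum_coeff]
        apply Finset.sum_eq_zero
        intro m' hm'
        have hm'lt : m' < ι := Finset.mem_range.1 hm'
        apply coeff_eq_zero_of_mul_bound cd.s _ (cd.s * m' + cd.r * l)
        · exact boundMono e cd m' _ l
        · rw [hsN]
          have := cd.hs
          nlinarith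
      -- step 4
      have step4 : (Dm e l (C (bet e cd i a) * X ^ ι)).coeff N = bet e cd l (bet e cd i a) := by
        have h1 : (Dm e l (C (bet e cd i a) * X ^ ι)).coeff N = th e cd (bet e cd i a) ι l := by
          rw [th, tc, if_pos hdl, hN]
        rw [h1]
        have h2 : th e cd (bet e cd i a) ι l
            = ∑ ij ∈ Finset.HasAntidiagonal.antidiagonal l, th e cd (bet e cd i a) 0 ij.1 * th e cd 1 ι ij.2 := by
          have := th_mul e cd (bet e cd i a) 1 0 ι l
          simpa using this
        rw [h2, Finset.sum_eq_single (l, 0)]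
        · rw [th_zero]
          have : th e cd (bet e cd i a) 0 l = bet e cd l (bet e cd i a) := rfl
          rw [this, mul_one]
        · intro ij hij hne
          have hij' : ij.1 + ij.2 = l := Finset.HasAntidiagonal.mem_antidiagonal.1 hij
          have h2pos : 0 < ij.2 := by
            rcases Nat.eq_zero_or_pos ij.2 with h | h
            · exact absurd (Prod.ext (by omega) (by omega)) hne
            · exact h
          rw [X_pow_top_vanish e cd ι ij.2 h2pos, mul_zero]
        · intro hmem
          simp [Finset.HasAntidiagonal.mem_antidiagonal] at hmem
      -- combine
      have hsplit : (C (bet e cd i a) * X ^ ι : Polynomial A) = Dm e i (C a) - low := by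
        rw [hlow]; ring
      rw [← step4, hsplit, Dm_sub, coeff_sub, step3, step1]
      ring
    · -- s ∤ r*l : both sides zero
      have hL : bet e cd l (bet e cd i a) = 0 := by
        rw [bet_def, tc, if_neg hdl]
      have hdil : ¬ cd.s ∣ cd.r * (l + i) := by
        intro hdil
        apply hdl
        have : cd.r * l = cd.r * (l + i) - cd.r * i := by
          rw [Nat.mul_add]; omega
        rw [this]
        exact Nat.dvd_sub hdil hdi
      have hR : bet e cd (l + i) a = 0 := by
        rw [bet_def, tc, if_neg hdil]
      rw [hL, hR, smul_zero]
  · -- s ∤ r*i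
    have hL : bet e cd i a = 0 := by rw [bet_def, tc, if_neg hdi]
    rw [hL, bet_zero]
    by_cases hdil : cd.s ∣ cd.r * (l + i)
    · -- need RHS zero as well
      set N := cd.r * (l + i) / cd.s with hN
      have hsN : cd.s * N = cd.r * l + cd.r * i := by
        rw [hN, Nat.mul_div_cancel' hdil, Nat.mul_add]
      have hz : (Dm e l (Dm e i (C a))).coeff N = 0 := by
        have hdeg : cd.s * (Dm e i (C a)).natDegree ≤ cd.r * i := cd.boundA a i
        set q := Dm e i (C a) with hq
        have hqsum : q = ∑ m' ∈ Finset.range (q.natDegree + 1), C (q.coeff m') * X ^ m' := by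
          ext t
          rw [finset_sum_coeff]
          rcases lt_or_ge t (q.natDegree + 1) with h | h
          · rw [Finset.sum_eq_single t]
            · simp [coeff_C_mul, coeff_X_pow]
            · intro b' _ hbne'
              simp [coeff_C_mul, coeff_X_pow, Ne.symm hbne']
            · intro hmem
              exact absurd (Finset.mem_range.2 h) hmem
          · rw [coeff_eq_zero_of_natDegree_lt (by omega)]
            apply (Finset.sum_eq_zero _).symm
            intro m' hm'
            have : m' < q.natDegree + 1 := Finset.mem_range.1 hm'
            simp [coeff_C_mul, coeff_X_pow]
            intro h'
            omega
        rw [hqsum, Dm_sum, finset_sum_coeff]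
        apply Finset.sum_eq_zero
        intro m' hm'
        have hm'le : m' ≤ q.natDegree := by
          have := Finset.mem_range.1 hm'
          omega
        apply coeff_eq_zero_of_mul_bound cd.s _ (cd.s * m' + cd.r * l)
        · exact boundMono e cd m' _ l
        · -- s * m' < r * i  strictly (no divisibility)
          have h1 : cd.s * m' ≤ cd.r * i := le_trans (Nat.mul_le_mul_left _ hm'le) hdeg
          have h2 : cd.s * m' ≠ cd.r * i := by
            intro h
            exact hdi ⟨m', by omega⟩
          omega
      have hzz : ((l + i).choose l : ℕ) • bet e cd (l + i) a = 0 := by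
        have h1 : (Dm e l (Dm e i (C a))).coeff N
            = (l + i).choose l • bet e cd (l + i) a := by
          rw [Dm_comp, coeff_smul, bet_def, tc, if_pos hdil, hN]
          norm_num
        rw [← h1, hz]
      rw [hzz]
    · have hR : bet e cd (l + i) a = 0 := by rw [bet_def, tc, if_neg hdil]
      rw [hR, smul_zero]

noncomputable def phiFun (a : A) : Polynomial A :=
  ∑ j ∈ Finset.range ((e (C a)).natDegree + 1), C (bet e cd j a) * X ^ j

lemma bet_high (a : A) (j : ℕ) (h : (e (C a)).natDegree < j) : bet e cd j a = 0 := by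
  rw [bet_def, Dm_eq_zero e j _ h, tc]
  split <;> simp

lemma phiFun_coeff (a : A) (j : ℕ) : (phiFun e cd a).coeff j = bet e cd j a := by
  rw [phiFun, finset_sum_coeff]
  rcases lt_or_ge ((e (C a)).natDegree) j with h | h
  · rw [bet_high e cd a j h]
    apply Finset.sum_eq_zero
    intro m hm
    have : m < (e (C a)).natDegree + 1 := Finset.mem_range.1 hm
    simp [coeff_C_mul, coeff_X_pow]
    intro h'
    omega
  · rw [Finset.sum_eq_single j]
    · simp [coeff_C_mul, coeff_X_pow]
    · intro b' _ hbne
      simp [coeff_C_mul, coeff_X_pow, Ne.symm hbne]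
    · intro hmem
      exact absurd (Finset.mem_range.2 (by omega)) hmem

noncomputable def phiHom : A →ₐ[k] Polynomial A where
  toFun := phiFun e cd
  map_one' := by
    ext j
    rw [phiFun_coeff, bet_one, coeff_one]
  map_mul' := fun x y => by
    ext j
    rw [phiFun_coeff, bet_mul, coeff_mul]
    exact Finset.sum_congr rfl fun ij _ => by rw [phiFun_coeff, phiFun_coeff]
  map_zero' := by
    ext j
    rw [phiFun_coeff, bet_zero]
    simp
  map_add' := fun x y => by
    ext j
    rw [phiFun_coeff, bet_add, coeff_add, phiFun_coeff, phiFun_coeff]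
  commutes' := fun κ => by
    ext j
    rw [phiFun_coeff, bet_algebraMap, Polynomial.algebraMap_apply, coeff_C]

noncomputable def phiExp : ExpMap k A where
  toFun := phiHom e cd
  eval_zero := fun a => by
    rw [← coeff_zero_eq_eval_zero]
    show (phiFun e cd a).coeff 0 = a
    rw [phiFun_coeff, bet_zero_idx]
  coaction := fun a => by
    apply Polynomial.ext
    intro i
    apply Polynomial.ext
    intro l
    have hL : (((phiHom e cd) a).map (phiHom e cd).toRingHom).coeff i
        = phiFun e cd (bet e cd i a) := by
      rw [coeff_map]
      show phiFun e cd (((phiHom e cd) a).coeff i) = _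
      congr 1
      exact phiFun_coeff e cd a i
    have hR : (((phiHom e cd) a).eval₂ (C.comp C) (X + C X)).coeff i
        = hasseDeriv i (phiFun e cd a) := tau_coeff _ i
    rw [hL, hR, phiFun_coeff, hasseDeriv_coeff, phiFun_coeff, bet_comp]
    rw [nsmul_eq_mul]
    congr 2
    exact Nat.choose_symm_add

lemma bet_vanish (hrigid : ∀ φ : ExpMap k A, ∀ a : A, φ.toFun a = Polynomial.C a) :
    ∀ (a : A) (j : ℕ), 0 < j → bet e cd j a = 0 := by
  intro a j hj
  have h := hrigid (phiExp e cd) a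
  have h2 : (phiFun e cd a).coeff j = (C a).coeff j := by
    have : phiFun e cd a = C a := h
    rw [this]
  rw [phiFun_coeff] at h2
  rw [h2, coeff_C, if_neg (by omega)]


lemma natDegree_eq_zero_of_Dm (a : A) (h : ∀ j, 0 < j → Dm e j (C a) = 0) :
    (e (C a)).natDegree = 0 := by
  by_contra hd
  have hdpos : 0 < (e (C a)).natDegree := Nat.pos_of_ne_zero hd
  have h1 := h _ hdpos
  have h2 : hasseDeriv ((e (C a)).natDegree) (e (C a)) = 0 := by
    have h3 := congrArg e h1
    rw [Dm] at h3
    simpa using h3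
  have h3 := congrArg (fun p => p.coeff 0) h2
  simp only [hasseDeriv_coeff, coeff_zero, Nat.zero_add, Nat.choose_self, Nat.cast_one,
    one_mul] at h3
  have hne : e (C a) ≠ 0 := by
    intro h0
    rw [h0] at hdpos
    simp at hdpos
  exact leadingCoeff_ne_zero.2 hne h3

/-- construct the critical data from explicit bounds on generators -/
lemma mk_critData (T : Finset A) (hT : Algebra.adjoin k (T : Set A) = ⊤)
    (r s : ℕ) (hs : 0 < s)
    (hbT : ∀ t ∈ T, ∀ j : ℕ, s * (Dm e j (C t)).natDegree ≤ r * j)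
    (hbX : ∀ j : ℕ, s * (Dm e j X).natDegree ≤ s + r * j) :
    ∃ cd : CritData e, cd.r = r ∧ cd.s = s := by
  have boundA : ∀ (a : A) (j : ℕ), s * (Dm e j (C a)).natDegree ≤ r * j := by
    intro a
    have ha : a ∈ Algebra.adjoin k (T : Set A) := hT ▸ Algebra.mem_top
    induction ha using Algebra.adjoin_induction with
    | mem t ht => exact hbT t ht
    | algebraMap κ =>
      intro j
      rcases Nat.eq_zero_or_pos j with h | h
      · subst h
        rw [Dm_zero]
        simp
      · rw [Dm_algebraMap e j h κ]
        simp
    | add x y hx hy ihx ihy =>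
      intro j
      rw [C_add, Dm_add]
      have h1 : (Dm e j (C x) + Dm e j (C y)).natDegree
          ≤ max (Dm e j (C x)).natDegree (Dm e j (C y)).natDegree := natDegree_add_le _ _
      calc s * (Dm e j (C x) + Dm e j (C y)).natDegree
          ≤ s * max (Dm e j (C x)).natDegree (Dm e j (C y)).natDegree :=
            Nat.mul_le_mul_left _ h1
        _ = max (s * (Dm e j (C x)).natDegree) (s * (Dm e j (C y)).natDegree) := by
            rw [Nat.mul_max_mul_left]
        _ ≤ r * j := max_le (ihx j) (ihy j)
    | mul x y hx hy ihx ihy =>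
      intro j
      rw [C_mul, Dm_mul]
      apply sum_deg_bound s hs
      intro ij hij
      have hij' : ij.1 + ij.2 = j := Finset.HasAntidiagonal.mem_antidiagonal.1 hij
      calc s * (Dm e ij.1 (C x) * Dm e ij.2 (C y)).natDegree
          ≤ r * ij.1 + r * ij.2 := mul_deg_bound s _ _ _ _ (ihx ij.1) (ihy ij.2)
        _ = r * j := by rw [← hij']; ring
  exact ⟨⟨r, s, hs, boundA, hbX⟩, rfl, rfl⟩

theorem part1 [Algebra.FiniteType k A]
    (hrigid : ∀ φ : ExpMap k A, ∀ a : A, φ.toFun a = Polynomial.C a) (a : A) :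
    (e (C a)).natDegree = 0 := by
  classical
  obtain ⟨T, hT⟩ := (Algebra.FiniteType.out : (⊤ : Subalgebra k A).FG)
  have ha : a ∈ Algebra.adjoin k (T : Set A) := by rw [hT]; exact Algebra.mem_top
  by_cases hAz : ∀ t ∈ T, ∀ j, 0 < j → Dm e j (C t) = 0
  · -- all generators invariant: direct proof
    apply natDegree_eq_zero_of_Dm
    clear hT
    induction ha using Algebra.adjoin_induction with
    | mem t ht => exact hAz t ht
    | algebraMap κ => exact fun j hj => Dm_algebraMap e j hj κ
    | add x y hx hy ihx ihy =>
      intro j hj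
      rw [C_add, Dm_add, ihx j hj, ihy j hj, add_zero]
    | mul x y hx hy ihx ihy =>
      intro j hj
      rw [C_mul, Dm_mul]
      apply Finset.sum_eq_zero
      intro ij hij
      have hij' : ij.1 + ij.2 = j := Finset.HasAntidiagonal.mem_antidiagonal.1 hij
      rcases Nat.eq_zero_or_pos ij.1 with h1 | h1
      · have h2 : 0 < ij.2 := by omega
        rw [ihy _ h2, mul_zero]
      · rw [ihx _ h1, zero_mul]
  · exfalso
    push_neg at hAz
    obtain ⟨t₁, ht₁, j₁, hj₁, hne₁⟩ := hAz
    -- the generic bound builder given (r, s) dominating both families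
    have mkBounds : ∀ (r s : ℕ), 0 < s →
        (∀ t ∈ T, ∀ j : ℕ, 0 < j → Dm e j (C t) ≠ 0 →
          ((Dm e j (C t)).natDegree : ℚ) / (j : ℚ) ≤ (r : ℚ) / (s : ℚ)) →
        (∀ j : ℕ, 0 < j → Dm e j (X : Polynomial A) ≠ 0 →
          (((Dm e j (X : Polynomial A)).natDegree : ℚ) - 1) / (j : ℚ) ≤ (r : ℚ) / (s : ℚ)) →
        ∃ cd : CritData e, cd.r = r ∧ cd.s = s := by
      intro r s hs hAq hXq
      apply mk_critData e T hT r s hs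
      · intro t ht j
        rcases Nat.eq_zero_or_pos j with h | h
        · subst h
          rw [Dm_zero]
          simp
        by_cases hne : Dm e j (C t) = 0
        · rw [hne]
          simp
        have hlec := hAq t ht j h hne
        have hq : ((Dm e j (C t)).natDegree : ℚ) * s ≤ (r : ℚ) * j := by
          rw [div_le_div_iff₀ (by exact_mod_cast h) (by exact_mod_cast hs)] at hlec
          linarith
        have hcast : ((s * (Dm e j (C t)).natDegree : ℕ) : ℚ) ≤ ((r * j : ℕ) : ℚ) := by
          push_cast
          linarith
        exact_mod_cast hcast
      · intro j
        rcases Nat.eq_zero_or_pos j with h | h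
        · subst h
          rw [Dm_zero]
          simp [natDegree_X]
        by_cases hne : Dm e j (X : Polynomial A) = 0
        · rw [hne]
          simp
        have hlec := hXq j h hne
        have hq : (((Dm e j (X : Polynomial A)).natDegree : ℚ) - 1) * s ≤ (r : ℚ) * j := by
          rw [div_le_div_iff₀ (by exact_mod_cast h) (by exact_mod_cast hs)] at hlec
          linarith
        have hcast : ((s * (Dm e j (X : Polynomial A)).natDegree : ℕ) : ℚ)
            ≤ ((s + r * j : ℕ) : ℚ) := by
          push_cast
          nlinarith [hq]
        exact_mod_cast hcast
    -- maximum over A-generator pairs, using a junk value -1 at invariant pairs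
    have hSne : (T ×ˢ Finset.Icc 1 (T.sup fun t => (e (C t)).natDegree)).Nonempty := by
      refine ⟨(t₁, j₁), ?_⟩
      rw [Finset.mem_product, Finset.mem_Icc]
      refine ⟨ht₁, hj₁, ?_⟩
      by_contra hgt
      refine hne₁ (Dm_eq_zero e j₁ _ ?_)
      have h1 : (e (C t₁)).natDegree ≤ T.sup (fun t => (e (C t)).natDegree) :=
        Finset.le_sup (f := fun t => (e (C t)).natDegree) ht₁
      omega
    obtain ⟨pA, hpA, hmaxA⟩ := Finset.exists_max_image _
      (fun p : A × ℕ => if Dm e p.2 (C p.1) = 0 then (-1 : ℚ)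
        else ((Dm e p.2 (C p.1)).natDegree : ℚ) / (p.2 : ℚ)) hSne
    rw [Finset.mem_product, Finset.mem_Icc] at hpA
    obtain ⟨hpAT, hpA1, hpAMT⟩ := hpA
    -- the value at (t₁, j₁) is nonnegative, hence so is the max, hence Dm pA ≠ 0
    have hmem₁ : (t₁, j₁) ∈ T ×ˢ Finset.Icc 1 (T.sup fun t => (e (C t)).natDegree) := by
      rw [Finset.mem_product, Finset.mem_Icc]
      refine ⟨ht₁, hj₁, ?_⟩
      by_contra hgt
      refine hne₁ (Dm_eq_zero e j₁ _ ?_)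
      have h1 : (e (C t₁)).natDegree ≤ T.sup (fun t => (e (C t)).natDegree) :=
        Finset.le_sup (f := fun t => (e (C t)).natDegree) ht₁
      omega
    have hval₁ := hmaxA (t₁, j₁) hmem₁
    simp only [] at hval₁
    rw [if_neg hne₁] at hval₁
    have hpAne : Dm e pA.2 (C pA.1) ≠ 0 := by
      intro h0
      rw [if_pos h0] at hval₁
      have : (0 : ℚ) ≤ ((Dm e j₁ (C t₁)).natDegree : ℚ) / (j₁ : ℚ) := by positivity
      linarith
    rw [if_neg hpAne] at hval₁
    have hvA0 : (0 : ℚ) ≤ ((Dm e pA.2 (C pA.1)).natDegree : ℚ) / (pA.2 : ℚ) := by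
      have : (0 : ℚ) ≤ ((Dm e j₁ (C t₁)).natDegree : ℚ) / (j₁ : ℚ) := by positivity
      linarith
    have hmaxA' : ∀ t ∈ T, ∀ j : ℕ, 0 < j → Dm e j (C t) ≠ 0 →
        ((Dm e j (C t)).natDegree : ℚ) / (j : ℚ)
          ≤ ((Dm e pA.2 (C pA.1)).natDegree : ℚ) / (pA.2 : ℚ) := by
      intro t ht j hj hne
      by_cases hle : j ≤ T.sup (fun t => (e (C t)).natDegree)
      · have h1 := hmaxA (t, j) (by
          rw [Finset.mem_product, Finset.mem_Icc]
          exact ⟨ht, hj, hle⟩)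
        simp only [] at h1
        rw [if_neg hne, if_neg hpAne] at h1
        exact h1
      · refine absurd (Dm_eq_zero e j _ ?_) hne
        have h1 : (e (C t)).natDegree ≤ T.sup (fun t => (e (C t)).natDegree) :=
          Finset.le_sup (f := fun t => (e (C t)).natDegree) ht
        omega
    by_cases hXB : ∀ j : ℕ, 0 < j → Dm e j (X : Polynomial A) ≠ 0 →
        (((Dm e j (X : Polynomial A)).natDegree : ℚ) - 1) / (j : ℚ)
          ≤ ((Dm e pA.2 (C pA.1)).natDegree : ℚ) / (pA.2 : ℚ)
    · -- critical pair is an A-generator pair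
      obtain ⟨cd, hcdr, hcds⟩ := mkBounds ((Dm e pA.2 (C pA.1)).natDegree) pA.2 hpA1
        hmaxA' hXB
      have hvan := bet_vanish e cd hrigid pA.1 pA.2 hpA1
      rw [bet_def, tc, hcdr, hcds] at hvan
      rw [if_pos (show pA.2 ∣ (Dm e pA.2 (C pA.1)).natDegree * pA.2 from dvd_mul_left _ _)] at hvan
      rw [Nat.mul_div_cancel _ hpA1] at hvan
      apply leadingCoeff_ne_zero.2 hpAne
      rw [leadingCoeff]
      simpa using hvan
    · -- critical pair is an X pair
      push_neg at hXB
      obtain ⟨j₂, hj₂, hne₂, hgt₂⟩ := hXB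
      have hSXne : (Finset.Icc 1 ((e (X : Polynomial A)).natDegree)).Nonempty := by
        refine ⟨j₂, ?_⟩
        rw [Finset.mem_Icc]
        refine ⟨hj₂, ?_⟩
        by_contra hgt
        exact hne₂ (Dm_eq_zero e j₂ _ (by omega))
      obtain ⟨jM, hjM, hmaxX⟩ := Finset.exists_max_image _
        (fun j : ℕ => if Dm e j (X : Polynomial A) = 0 then (-1 : ℚ)
          else (((Dm e j (X : Polynomial A)).natDegree : ℚ) - 1) / (j : ℚ)) hSXne
      rw [Finset.mem_Icc] at hjM
      obtain ⟨hjM1, hjMMX⟩ := hjM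
      have hmem₂ : j₂ ∈ Finset.Icc 1 ((e (X : Polynomial A)).natDegree) := by
        rw [Finset.mem_Icc]
        refine ⟨hj₂, ?_⟩
        by_contra hgt
        exact hne₂ (Dm_eq_zero e j₂ _ (by omega))
      have hval₂ := hmaxX j₂ hmem₂
      beta_reduce at hval₂
      rw [if_neg hne₂] at hval₂
      have hjMne : Dm e jM (X : Polynomial A) ≠ 0 := by
        intro h0
        rw [if_pos h0] at hval₂
        linarith
      rw [if_neg hjMne] at hval₂
      have hmaxX' : ∀ j : ℕ, 0 < j → Dm e j (X : Polynomial A) ≠ 0 →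
          (((Dm e j (X : Polynomial A)).natDegree : ℚ) - 1) / (j : ℚ)
            ≤ (((Dm e jM (X : Polynomial A)).natDegree : ℚ) - 1) / (jM : ℚ) := by
        intro j hj hne
        by_cases hle : j ≤ (e (X : Polynomial A)).natDegree
        · have h1 := hmaxX j (by rw [Finset.mem_Icc]; exact ⟨hj, hle⟩)
          beta_reduce at h1
          rw [if_neg hne, if_neg hjMne] at h1
          exact h1
        · exact absurd (Dm_eq_zero e j _ (by omega)) hne
      have hdom : ((Dm e pA.2 (C pA.1)).natDegree : ℚ) / (pA.2 : ℚ)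
          ≤ (((Dm e jM (X : Polynomial A)).natDegree : ℚ) - 1) / (jM : ℚ) := by
        linarith
      have hAdom : ∀ t ∈ T, ∀ j : ℕ, 0 < j → Dm e j (C t) ≠ 0 →
          ((Dm e j (C t)).natDegree : ℚ) / (j : ℚ)
            ≤ (((Dm e jM (X : Polynomial A)).natDegree : ℚ) - 1) / (jM : ℚ) := by
        intro t ht j hj hne
        exact le_trans (hmaxA' t ht j hj hne) hdom
      have hd1 : 1 ≤ (Dm e jM (X : Polynomial A)).natDegree := by
        by_contra hd0
        have hd0' : (Dm e jM (X : Polynomial A)).natDegree = 0 := by omega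
        have hjMpos : (0 : ℚ) < (jM : ℚ) := by exact_mod_cast hjM1
        have hneg : (((Dm e jM (X : Polynomial A)).natDegree : ℚ) - 1) / (jM : ℚ) < 0 := by
          rw [hd0']
          apply div_neg_of_neg_of_pos _ hjMpos
          norm_num
        linarith
      have hrs : ((((Dm e jM (X : Polynomial A)).natDegree - 1 : ℕ)) : ℚ) / (jM : ℚ)
          = (((Dm e jM (X : Polynomial A)).natDegree : ℚ) - 1) / (jM : ℚ) := by
        congr 1
        push_cast [hd1]
        ring
      obtain ⟨cd, hcdr, hcds⟩ := mkBounds ((Dm e jM (X : Polynomial A)).natDegree - 1) jM hjM1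
        (by rw [hrs]; exact hAdom) (by rw [hrs]; exact hmaxX')
      have hvan := X_pow_top_vanish e cd 1 jM hjM1
      rw [th, tc, hcdr, hcds] at hvan
      rw [if_pos (show jM ∣ ((Dm e jM (X : Polynomial A)).natDegree - 1) * jM from
        dvd_mul_left _ _)] at hvan
      rw [Nat.mul_div_cancel _ hjM1] at hvan
      have hCX : (C (1 : A) * X ^ 1 : Polynomial A) = X := by simp
      rw [hCX] at hvan
      apply leadingCoeff_ne_zero.2 hjMne
      rw [leadingCoeff]
      have hidx : 1 + ((Dm e jM (X : Polynomial A)).natDegree - 1)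
          = (Dm e jM (X : Polynomial A)).natDegree := by omega
      rw [← hidx]
      exact hvan


/-- Part 2 : if `e` maps constants to constants, then every constant of `B[X]`
comes from a constant of `A[X]`. -/
theorem part2 (hdeg : ∀ a : A, (e (C a)).natDegree = 0) (b : B) :
    ∃ a : A, e (C a) = C b := by
  classical
  -- the induced ring hom A → B
  set ρ : A →+* B :=
    { toFun := fun a => (e (C a)).coeff 0
      map_one' := by simp
      map_mul' := fun x y => by
        show (e (C (x * y))).coeff 0 = (e (C x)).coeff 0 * (e (C y)).coeff 0
        have h1 := eq_C_of_natDegree_eq_zero (hdeg x)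
        have h2 := eq_C_of_natDegree_eq_zero (hdeg y)
        have h3 : e (C (x * y)) = e (C x) * e (C y) := by rw [C_mul, map_mul]
        rw [h3, h1, h2, ← C_mul, coeff_C_zero]
        simp
      map_zero' := by simp
      map_add' := fun x y => by
        show (e (C (x + y))).coeff 0 = (e (C x)).coeff 0 + (e (C y)).coeff 0
        have h3 : e (C (x + y)) = e (C x) + e (C y) := by rw [C_add, map_add]
        rw [h3, coeff_add] } with hρ
  have heC : ∀ a : A, e (C a) = C (ρ a) := by
    intro a
    have := eq_C_of_natDegree_eq_zero (hdeg a)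
    rw [this]
    rfl
  have hρinj : Function.Injective ρ := by
    intro x y hxy
    have : e (C x) = e (C y) := by rw [heC, heC, hxy]
    have := e.injective this
    exact C_injective this
  -- the structural identity : e = eval₂ (C ∘ ρ) (e X)
  have hkey : ∀ p : Polynomial A, e p = eval₂ (C.comp ρ) (e X) p := by
    have hhom : (e.toAlgHom.toRingHom : Polynomial A →+* Polynomial B)
        = eval₂RingHom (C.comp ρ) (e X) := by
      apply Polynomial.ringHom_ext
      · intro a
        simp only [AlgHom.toRingHom_eq_coe, RingHom.coe_coe, AlgHom.coe_coe, coe_eval₂RingHom]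
        rw [eval₂_C]
        exact heC a
      · simp only [AlgHom.toRingHom_eq_coe, RingHom.coe_coe, AlgHom.coe_coe, coe_eval₂RingHom]
        rw [eval₂_X]
        rfl
    intro p
    have := RingHom.congr_fun hhom p
    simpa using this
  -- consider the preimage of C b
  set P := e.symm (C b) with hP
  rcases Nat.eq_zero_or_pos P.natDegree with hd | hd
  · refine ⟨P.coeff 0, ?_⟩
    have := eq_C_of_natDegree_eq_zero hd
    rw [← this, hP]
    exact e.apply_symm_apply _
  · exfalso
    have hPne : P ≠ 0 := by
      intro h0
      rw [h0] at hd
      simp at hd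
    have heP : e P = C b := by rw [hP]; exact e.apply_symm_apply _
    set g := e X with hg
    -- the algebraic relation for g over B
    set q : Polynomial B := P.map ρ - C b with hq
    have hqne : q ≠ 0 := by
      intro h0
      have hc : q.coeff P.natDegree = ρ (P.leadingCoeff) := by
        rw [hq, coeff_sub, coeff_map, coeff_C, if_neg (by omega)]
        simp only [sub_zero, Polynomial.leadingCoeff]
      rw [h0] at hc
      have : ρ P.leadingCoeff = 0 := by simpa using hc.symm
      have : P.leadingCoeff = 0 := hρinj (by simpa using this)
      exact hPne (leadingCoeff_eq_zero.1 this)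
    have haeval : aeval g q = 0 := by
      have h1 : aeval g (P.map ρ) = eval₂ (C.comp ρ) g P := by
        rw [aeval_def, eval₂_map]
        rfl
      have h2 : aeval g (C b) = C b := by
        rw [aeval_C]
        rfl
      rw [hq, map_sub, h1, h2, ← hkey, heP, sub_self]
    -- move to the fraction field
    set K := FractionRing B with hK
    set f : B →+* K := algebraMap B K with hf
    have hfinj : Function.Injective f := IsFractionRing.injective B K
    set g' := g.map f with hg'
    set q' := q.map f with hq'
    have hq'ne : q' ≠ 0 := by
      rw [hq']
      exact (Polynomial.map_ne_zero_iff hfinj).2 hqne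
    have haeval' : aeval g' q' = 0 := by
      have h1 : aeval g' q' = eval₂ ((C : K →+* Polynomial K).comp f) g' q := by
        rw [aeval_def, hq', eval₂_map, Polynomial.algebraMap_eq]
      have h2 : (Polynomial.mapRingHom f) (aeval g q) = eval₂ ((mapRingHom f).comp (C : B →+* Polynomial B)) (g.map f) q := by
        rw [aeval_def, hom_eval₂]
        rfl
      have h3 : ((mapRingHom f).comp (C : B →+* Polynomial B)) = (C : K →+* Polynomial K).comp f := by
        ext x
        simp
      rw [h1, ← h3, ← h2, haeval, map_zero]
    have halg : IsAlgebraic K g' := ⟨q', hq'ne, haeval'⟩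
    have hint : IsIntegral K g' := isAlgebraic_iff_isIntegral.1 halg
    -- X lies in the adjoin of g'
    have hXmem : (X : Polynomial K) ∈ Algebra.adjoin K {g'} := by
      have hXP : (X : Polynomial B) = eval₂ (C.comp ρ) g (e.symm X) := by
        rw [← hkey]
        simp
      have hXK : (X : Polynomial K) = aeval g' ((e.symm X).map (f.comp ρ)) := by
        have h1 : aeval g' ((e.symm X).map (f.comp ρ))
            = eval₂ ((C : K →+* Polynomial K).comp (f.comp ρ)) g' (e.symm X) := by
          rw [aeval_def, eval₂_map, Polynomial.algebraMap_eq]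
        have h2 : (mapRingHom f) ((X : Polynomial B)) = X := by simp
        have h3 : (mapRingHom f) (eval₂ (C.comp ρ) g (e.symm X))
            = eval₂ ((mapRingHom f).comp (C.comp ρ)) g' (e.symm X) := by
          rw [hom_eval₂]
          rfl
        have h4 : ((mapRingHom f).comp ((C : B →+* Polynomial B).comp ρ))
            = (C : K →+* Polynomial K).comp (f.comp ρ) := by
          ext x
          simp
        rw [h1, ← h4, ← h3, ← hXP, h2]
      rw [hXK]
      exact Polynomial.aeval_mem_adjoin_singleton _ _
    have hXint : IsIntegral K (X : Polynomial K) :=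
      IsIntegral.of_mem_of_fg (Algebra.adjoin K {g'}) hint.fg_adjoin_singleton _ hXmem
    have hXalg : IsAlgebraic K (X : Polynomial K) := hXint.isAlgebraic
    exact (Polynomial.transcendental_X K) hXalg

theorem main_statement [Algebra.FiniteType k A]
    (hrigid : ∀ φ : ExpMap k A, ∀ a : A, φ.toFun a = Polynomial.C a) :
    (e.toAlgHom.comp (IsScalarTower.toAlgHom k A (Polynomial A))).range =
      (IsScalarTower.toAlgHom k B (Polynomial B)).range := by
  have hdeg := part1 e hrigid
  have hF : ∀ a : A, (e.toAlgHom.comp (IsScalarTower.toAlgHom k A (Polynomial A))) a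
      = e (C a) := fun a => rfl
  have hG : ∀ b : B, (IsScalarTower.toAlgHom k B (Polynomial B)) b = C b := fun b => rfl
  apply le_antisymm
  · rintro x ⟨a, rfl⟩
    exact ⟨(e (C a)).coeff 0, (eq_C_of_natDegree_eq_zero (hdeg a)).symm⟩
  · rintro x ⟨b, rfl⟩
    obtain ⟨a, ha⟩ := part2 e hdeg b
    exact ⟨a, ha⟩


end

end RigidCancelAux

/-- Let `A` be a rigid affine `k`-domain (`ML(A) = A`), and `B` a
`k`-domain with `A^{[1]} ≅_k B^{[1]}` (via `e`) and `trdeg_k B = trdeg_k A`.  If `A`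
(viewed inside `B^{[1]}` via `e`) is algebraically closed in `B^{[1]}`, then `A = B`
(the images of `A` and `B` in `B^{[1]}` coincide). -/
theorem rigid_cancellation [IsDomain A] [Algebra.FiniteType k A]
    (hrigid : ∀ φ : ExpMap k A, ∀ a : A, φ.toFun a = Polynomial.C a)
    (B : Type*) [CommRing B] [IsDomain B] [Algebra k B]
    (e : Polynomial A ≃ₐ[k] Polynomial B)
    (htr : ∃ (s : Set A) (u : Set B),
      IsTranscendenceBasis k ((↑) : s → A) ∧ IsTranscendenceBasis k ((↑) : u → B) ∧
      Nonempty (s ≃ u))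
    (hac : ∀ q : Polynomial B,
      IsAlgebraic (e.toAlgHom.comp (IsScalarTower.toAlgHom k A (Polynomial A))).range q →
        q ∈ (e.toAlgHom.comp (IsScalarTower.toAlgHom k A (Polynomial A))).range) :
    (e.toAlgHom.comp (IsScalarTower.toAlgHom k A (Polynomial A))).range =
      (IsScalarTower.toAlgHom k B (Polynomial B)).range := by
  exact RigidCancelAux.main_statement e hrigid
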